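/- Kleene's first model K₁ weakly embeds into Scott's model ℰ: there exists an injective map f : ℕ → Set ℕ such that each f n is computably enumerable and for all a, b, c ∈ ℕ, if φ_a(b) is defined and equals c then (f a)·(f b) = f c, where · denotes Scott's graph-model application. Thus ℰ is a weak completion of K₁. -/

import Mathlib

set_option maxHeartbeats 1000000

/-- Scott's graph-model application on subsets of `ℕ`:
`A · B = {x | ∃ u, ⟨x, u⟩ ∈ A ∧ D_u ⊆ B}`, where `D_u` is the `u`-th finite
set of naturals (via the canonical `Denumerable (Finset ℕ)` coding). -/
def scottApp (A B : Set ℕ) : Set ℕ :=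
  {x : ℕ | ∃ u : ℕ, Nat.pair x u ∈ A ∧ (Denumerable.ofNat (Finset ℕ) u : Set ℕ) ⊆ B}

/-- The `e`-th partial computable function on `ℕ`. -/
def phi (e : ℕ) : ℕ →. ℕ :=
  Nat.Partrec.Code.eval (Denumerable.ofNat Nat.Partrec.Code e)

/-! ### Auxiliary construction -/

/-- Numeric code of the singleton finset `{t}`. -/
def sing (t : ℕ) : ℕ := Nat.pair t 0 + 1

lemma ofNat_sing (t : ℕ) : Denumerable.ofNat (Finset ℕ) (sing t) = ({t} : Finset ℕ) := by
  have h : Denumerable.ofNat (Finset ℕ) (sing t) =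
      Finset.map (Denumerable.eqv ℕ).symm.toEmbedding
        (Denumerable.raise'Finset (Denumerable.ofNat (List ℕ) (sing t)) 0) := rfl
  rw [h]
  have h2 : sing t = Nat.succ (Nat.pair t 0) := rfl
  rw [h2, Denumerable.list_ofNat_succ]
  simp [Denumerable.raise'Finset, Denumerable.raise', Denumerable.eqv]
  rfl

lemma sing_ne_zero (t : ℕ) : sing t ≠ 0 := by simp [sing]

lemma sing_inj {t t' : ℕ} (h : sing t = sing t') : t = t' := by
  have := congrArg (fun m => (Nat.unpair (m - 1)).1) h
  simpa [sing] using this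

/-- The tag of `n`. -/
def tagN (n : ℕ) : ℕ := Nat.pair n (sing 0)

lemma pair_inj {a b c d : ℕ} (h : Nat.pair a b = Nat.pair c d) : a = c ∧ b = d := by
  have := congrArg Nat.unpair h
  simpa using this

lemma tagN_ne_zero (n : ℕ) : tagN n ≠ 0 := by
  intro h
  have := congrArg (fun m => (Nat.unpair m).2) h
  simp [tagN] at this
  exact sing_ne_zero 0 this

/-- The membership relation generating our embedding `f`: `MemR x n` means `x ∈ f n`. -/
inductive MemR : ℕ → ℕ → Prop
  | tag (n : ℕ) : MemR (tagN n) n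
  | graph {n b c y : ℕ} (h : c ∈ phi n b) (hy : MemR y c) :
      MemR (Nat.pair y (sing (tagN b))) n

lemma MemR_cases {x n : ℕ} (h : MemR x n) :
    x = tagN n ∨ ∃ b c y, c ∈ phi n b ∧ MemR y c ∧ x = Nat.pair y (sing (tagN b)) := by
  cases h with
  | tag n => exact Or.inl rfl
  | graph h hy => exact Or.inr ⟨_, _, _, h, hy, rfl⟩

lemma MemR_ne_zero {x n : ℕ} (h : MemR x n) : x ≠ 0 := by
  rcases MemR_cases h with h1 | ⟨b, c, y, _, _, h1⟩
  · exact h1 ▸ tagN_ne_zero n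
  · subst h1
    intro h0
    have := congrArg (fun m => (Nat.unpair m).2) h0
    simp at this
    exact sing_ne_zero _ this

lemma MemR_tag_inv {m n : ℕ} (h : MemR (Nat.pair m (sing 0)) n) : m = n := by
  rcases MemR_cases h with h1 | ⟨b, c, y, _, _, h1⟩
  · exact (pair_inj h1).1
  · exfalso
    have h2 := (pair_inj h1).2
    have h3 := sing_inj h2
    exact tagN_ne_zero b h3.symm

/-- The embedding. -/
def fK (n : ℕ) : Set ℕ := {x | MemR x n}

lemma scottApp_fK {a b c : ℕ} (h : phi a b = Part.some c) :
    scottApp (fK a) (fK b) = fK c := by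
  have hc : c ∈ phi a b := by rw [h]; exact Part.mem_some c
  ext x
  constructor
  · rintro ⟨u, hxu, hsub⟩
    rcases MemR_cases hxu with h1 | ⟨b', c', y, hphi, hy, h1⟩
    · exfalso
      obtain ⟨hx, hu⟩ := pair_inj h1
      subst hu
      rw [ofNat_sing] at hsub
      have h0 : (0 : ℕ) ∈ fK b := hsub (by simp)
      exact MemR_ne_zero h0 rfl
    · obtain ⟨hx, hu⟩ := pair_inj h1
      subst hx hu
      rw [ofNat_sing] at hsub
      have htag : MemR (tagN b') b := hsub (by simp)
      have hbb : b' = b := MemR_tag_inv htag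
      subst hbb
      rw [h, Part.mem_some_iff] at hphi
      subst hphi
      exact hy
  · intro hx
    refine ⟨sing (tagN b), MemR.graph hc hx, ?_⟩
    rw [ofNat_sing]
    intro z hz
    simp at hz
    subst hz
    exact MemR.tag b

lemma fK_injective : Function.Injective fK := by
  intro m n h
  have h1 : tagN m ∈ fK m := MemR.tag m
  rw [h] at h1
  exact MemR_tag_inv h1

/-! ### Computable enumeration of `fK` -/

open Nat.Partrec (Code)

/-- One step of the stage-wise enumeration. -/
def stageBody (s : ℕ) (l : List (ℕ × ℕ)) : List (ℕ × ℕ) :=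
  (l ++ (List.range (s + 1)).map fun n => (tagN n, n)) ++
    (List.range (s + 1)).flatMap fun n =>
      (List.range (s + 1)).flatMap fun b =>
        (Nat.Partrec.Code.evaln (s + 1) (Denumerable.ofNat Code n) b).casesOn []
          fun c => l.flatMap fun p =>
            if p.2 = c then [(Nat.pair p.1 (sing (tagN b)), n)] else []

/-- Stage-wise enumeration of the graph of `MemR`. -/
def stage : ℕ → List (ℕ × ℕ) := fun s => Nat.rec [] (fun s ih => stageBody s ih) s

lemma stage_succ (s : ℕ) : stage (s + 1) = stageBody s (stage s) := rfl

lemma stage_mono_succ (s : ℕ) {p : ℕ × ℕ} (h : p ∈ stage s) : p ∈ stage (s + 1) := by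
  rw [stage_succ, stageBody]
  simp only [List.mem_append]
  exact Or.inl (Or.inl h)

lemma stage_mono {s s' : ℕ} (hss : s ≤ s') {p : ℕ × ℕ} (h : p ∈ stage s) : p ∈ stage s' := by
  induction hss with
  | refl => exact h
  | step _ ih => exact stage_mono_succ _ ih

lemma stage_sound : ∀ s : ℕ, ∀ x n : ℕ, (x, n) ∈ stage s → MemR x n := by
  intro s
  induction s with
  | zero => intro x n h; simp [stage] at h
  | succ s ih =>
    intro x n h
    rw [stage_succ, stageBody] at h
    simp only [List.mem_append] at h
    rcases h with (h | h) | h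
    · exact ih x n h
    · rw [List.mem_map] at h
      obtain ⟨m, -, hm⟩ := h
      rw [Prod.mk.injEq] at hm
      obtain ⟨h1, h2⟩ := hm
      subst h1; subst h2
      exact MemR.tag m
    · rw [List.mem_flatMap] at h
      obtain ⟨m, _, hm⟩ := h
      rw [List.mem_flatMap] at hm
      obtain ⟨b, _, hb⟩ := hm
      rcases he : Nat.Partrec.Code.evaln (s + 1) (Denumerable.ofNat Code m) b with _ | c
      · rw [he] at hb; simp at hb
      · rw [he] at hb
        simp only [List.mem_flatMap] at hb
        obtain ⟨p, hp, hpif⟩ := hb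
        by_cases hc : p.2 = c
        · rw [if_pos hc] at hpif
          rw [List.mem_singleton, Prod.mk.injEq] at hpif
          obtain ⟨h1, h2⟩ := hpif
          subst h1; subst h2
          exact MemR.graph (Nat.Partrec.Code.evaln_sound he) (hc ▸ ih p.1 p.2 hp)
        · rw [if_neg hc] at hpif; simp at hpif

lemma stage_complete {x n : ℕ} (h : MemR x n) : ∃ s, (x, n) ∈ stage s := by
  induction h with
  | tag n =>
    refine ⟨n + 1, ?_⟩
    rw [stage_succ, stageBody]
    simp only [List.mem_append]
    refine Or.inl (Or.inr ?_)
    exact List.mem_map.2 ⟨n, by simp, rfl⟩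
  | @graph m b c y hphi hy ih =>
    obtain ⟨s₁, hs₁⟩ := ih
    obtain ⟨k, hk⟩ := Nat.Partrec.Code.evaln_complete.1 hphi
    set s := max (max s₁ k) (max m b) with hs
    refine ⟨s + 1, ?_⟩
    rw [stage_succ, stageBody]
    simp only [List.mem_append]
    refine Or.inr ?_
    rw [List.mem_flatMap]
    refine ⟨m, by simp; omega, ?_⟩
    rw [List.mem_flatMap]
    refine ⟨b, by simp; omega, ?_⟩
    have he : Nat.Partrec.Code.evaln (s + 1) (Denumerable.ofNat Code m) b = some c :=
      Nat.Partrec.Code.evaln_mono (k₂ := s + 1) (by omega) hk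
    rw [he]
    simp only [List.mem_flatMap]
    refine ⟨(y, c), stage_mono (by omega) hs₁, ?_⟩
    simp

lemma memR_iff_stage {x n : ℕ} : MemR x n ↔ ∃ s, (x, n) ∈ stage s :=
  ⟨stage_complete, fun ⟨s, hs⟩ => stage_sound s x n hs⟩

/-- Boolean list membership. -/
def memB (q : ℕ × ℕ) (l : List (ℕ × ℕ)) : Bool :=
  l.foldr (fun p acc => decide (p = q) || acc) false

lemma memB_iff (q : ℕ × ℕ) (l : List (ℕ × ℕ)) : memB q l = true ↔ q ∈ l := by
  induction l with
  | nil => simp [memB]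
  | cons p l ih => simp [memB] at ih ⊢; rw [ih]; tauto

lemma primrec_sing : Primrec sing :=
  Primrec.succ.comp (Primrec₂.natPair.comp Primrec.id (Primrec.const 0))

lemma primrec_tagN : Primrec tagN :=
  Primrec₂.natPair.comp Primrec.id (Primrec.const (sing 0))

lemma primrec_stageBody : Primrec₂ stageBody := by
  have hs : Primrec fun a : ℕ × List (ℕ × ℕ) => a.1 := Primrec.fst
  have hl : Primrec fun a : ℕ × List (ℕ × ℕ) => a.2 := Primrec.snd
  have hTags : Primrec fun a : ℕ × List (ℕ × ℕ) =>
      (List.range (a.1 + 1)).map fun n => (tagN n, n) :=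
    Primrec.list_map (Primrec.list_range.comp (Primrec.succ.comp hs))
      ((Primrec₂.pair.comp (primrec_tagN.comp Primrec.snd) Primrec.snd).to₂)
  have hIf : Primrec fun a4 : (((((ℕ × List (ℕ × ℕ)) × ℕ) × ℕ) × ℕ) × (ℕ × ℕ)) =>
      if a4.2.2 = a4.1.2 then
        [(Nat.pair a4.2.1 (sing (tagN a4.1.1.2)), a4.1.1.1.2)] else [] := by
    apply Primrec.ite
    · exact Primrec.eq.comp (Primrec.snd.comp Primrec.snd) (Primrec.snd.comp Primrec.fst)
    · exact Primrec.list_cons.comp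
        (Primrec₂.pair.comp
          (Primrec₂.natPair.comp (Primrec.fst.comp Primrec.snd)
            (primrec_sing.comp (primrec_tagN.comp
              (Primrec.snd.comp (Primrec.fst.comp Primrec.fst)))))
          (Primrec.snd.comp (Primrec.fst.comp (Primrec.fst.comp Primrec.fst))))
        (Primrec.const [])
    · exact Primrec.const []
  have hSome : Primrec₂ fun (a3 : (((ℕ × List (ℕ × ℕ)) × ℕ) × ℕ)) (c : ℕ) =>
      a3.1.1.2.flatMap fun p =>
        if p.2 = c then [(Nat.pair p.1 (sing (tagN a3.2)), a3.1.2)] else [] := by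
    exact (Primrec.list_flatMap
      (Primrec.snd.comp (Primrec.fst.comp (Primrec.fst.comp Primrec.fst)))
      hIf.to₂).to₂
  have hEval : Primrec fun a2 : ((ℕ × List (ℕ × ℕ)) × ℕ) × ℕ =>
      Nat.Partrec.Code.evaln (a2.1.1.1 + 1) (Denumerable.ofNat Code a2.1.2) a2.2 :=
    Nat.Partrec.Code.primrec_evaln.comp
      (Primrec₂.pair.comp
        (Primrec₂.pair.comp
          (Primrec.succ.comp (Primrec.fst.comp (Primrec.fst.comp Primrec.fst)))
          ((Primrec.ofNat Code).comp (Primrec.snd.comp Primrec.fst)))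
        Primrec.snd)
  have hInner2 : Primrec₂ fun (a1 : (ℕ × List (ℕ × ℕ)) × ℕ) (b : ℕ) =>
      ((Nat.Partrec.Code.evaln (a1.1.1 + 1) (Denumerable.ofNat Code a1.2) b).casesOn []
        fun c => a1.1.2.flatMap fun p =>
          if p.2 = c then [(Nat.pair p.1 (sing (tagN b)), a1.2)] else [] : List (ℕ × ℕ)) := by
    exact (Primrec.option_casesOn hEval (Primrec.const []) hSome).to₂
  have hInner1 : Primrec₂ fun (a : ℕ × List (ℕ × ℕ)) (m : ℕ) =>
      (List.range (a.1 + 1)).flatMap fun b =>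
        ((Nat.Partrec.Code.evaln (a.1 + 1) (Denumerable.ofNat Code m) b).casesOn []
          fun c => a.2.flatMap fun p =>
            if p.2 = c then [(Nat.pair p.1 (sing (tagN b)), m)] else [] : List (ℕ × ℕ)) := by
    exact Primrec.to₂ <| Primrec.list_flatMap
      (Primrec.list_range.comp (Primrec.succ.comp (Primrec.fst.comp Primrec.fst)))
      hInner2
  have hB : Primrec fun a : ℕ × List (ℕ × ℕ) =>
      (List.range (a.1 + 1)).flatMap fun m =>
        (List.range (a.1 + 1)).flatMap fun b =>
          ((Nat.Partrec.Code.evaln (a.1 + 1) (Denumerable.ofNat Code m) b).casesOn []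
            fun c => a.2.flatMap fun p =>
              if p.2 = c then [(Nat.pair p.1 (sing (tagN b)), m)] else [] : List (ℕ × ℕ)) :=
    Primrec.list_flatMap (Primrec.list_range.comp (Primrec.succ.comp hs)) hInner1
  exact Primrec.to₂ <| Primrec.list_append.comp (Primrec.list_append.comp hl hTags) hB

lemma primrec_stage : Primrec stage :=
  Primrec.nat_rec₁ [] primrec_stageBody

lemma repred_fK (n : ℕ) : REPred (· ∈ fK n) := by
  have hmem : Primrec fun a : ℕ × ℕ =>
      (stage a.2).foldr (fun p acc => decide (p = (a.1, n)) || acc) false :=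
    Primrec.list_foldr (primrec_stage.comp Primrec.snd) (Primrec.const false)
      (Primrec.to₂ <| (Primrec.dom_bool₂ (· || ·)).comp
        (Primrec.eq.comp (Primrec.fst.comp Primrec.snd)
          (Primrec₂.pair.comp (Primrec.fst.comp Primrec.fst) (Primrec.const n))).decide
        (Primrec.snd.comp Primrec.snd))
  have hmem2 : Computable₂ fun (x s : ℕ) => memB (x, n) (stage s) := hmem.to_comp.to₂
  have hp : Partrec₂ fun (x s : ℕ) => (Part.some (memB (x, n) (stage s)) : Part Bool) :=
    hmem2.partrec₂
  have hg : Partrec fun x : ℕ =>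
      Nat.rfind fun s => (Part.some (memB (x, n) (stage s)) : Part Bool) :=
    Partrec.rfind hp
  refine hg.dom_re.of_eq fun x => ?_
  refine (Nat.rfind_dom (p := fun s => (Part.some (memB (x, n) (stage s)) : Part Bool))).trans ?_
  constructor
  · rintro ⟨s, h1, -⟩
    rw [Part.mem_some_iff] at h1
    have := (memB_iff _ _).1 h1.symm
    exact stage_sound s x n this
  · intro hx
    obtain ⟨s, hs⟩ := stage_complete hx
    exact ⟨s, Part.mem_some_iff.2 ((memB_iff _ _).2 hs).symm, fun _ => trivial⟩

theorem K1_embeds_into_scott_ce_model :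
    ∃ f : ℕ → Set ℕ, Function.Injective f ∧
      (∀ n : ℕ, REPred (· ∈ f n)) ∧
      ∀ a b c : ℕ, phi a b = Part.some c → scottApp (f a) (f b) = f c := by
  exact ⟨fK, fK_injective, repred_fK, fun a b c h => scottApp_fK h⟩
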